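/- In any triangle with circumradius R, inradius r, and semiperimeter s, 4R + r ≥ s√3. -/

import Mathlib

theorem four_R_add_r (a b c : ℝ) (ha : 0 < a) (hb : 0 < b) (hc : 0 < c)
    (hA : a < b + c) (hB : b < c + a) (hC : c < a + b) (s S : ℝ) (hs : s = (a + b + c) / 2)
    (hS : S = Real.sqrt (s * (s - a) * (s - b) * (s - c))) (R : ℝ) (hR : R = a * b * c / (4 * S)) (r : ℝ) (hr : r = S / s) :
    4 * R + r ≥ s * Real.sqrt 3 := by
  have hs0 : 0 < s := by rw [hs]; linarith
  have hx : 0 < s - a := by rw [hs]; linarith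
  have hy : 0 < s - b := by rw [hs]; linarith
  have hz : 0 < s - c := by rw [hs]; linarith
  have hprod : 0 < s * (s - a) * (s - b) * (s - c) := by positivity
  have hSpos : 0 < S := by rw [hS]; exact Real.sqrt_pos.mpr hprod
  have hS2 : S ^ 2 = s * (s - a) * (s - b) * (s - c) := by
    rw [hS]; exact Real.sq_sqrt hprod.le
  have h3 : (Real.sqrt 3) ^ 2 = 3 := Real.sq_sqrt (by norm_num)
  have hsq3 : 0 ≤ Real.sqrt 3 := Real.sqrt_nonneg 3
  have hsum : (s - a) + (s - b) + (s - c) = s := by rw [hs]; ring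
  set q := (s - a) * (s - b) + (s - b) * (s - c) + (s - c) * (s - a) with hqdef
  have hq0 : 0 < q := by
    have := mul_pos hx hy; have := mul_pos hy hz; have := mul_pos hz hx
    unfold q; linarith
  have hq2 : 3 * S ^ 2 ≤ q ^ 2 := by
    rw [hS2]
    nlinarith [sq_nonneg ((s - a) * (s - b) - (s - b) * (s - c)),
      sq_nonneg ((s - b) * (s - c) - (s - c) * (s - a)),
      sq_nonneg ((s - c) * (s - a) - (s - a) * (s - b)), hsum,
      mul_pos (mul_pos hx hy) hz]
  have hqS : Real.sqrt 3 * S ≤ q := by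
    have h1 : Real.sqrt (3 * S ^ 2) ≤ Real.sqrt (q ^ 2) := Real.sqrt_le_sqrt hq2
    rwa [Real.sqrt_mul (by norm_num) _, Real.sqrt_sq hSpos.le, Real.sqrt_sq hq0.le,
      show Real.sqrt 3 = Real.sqrt 3 from rfl] at h1
  have key : 4 * R + r = s * q / S := by
    have habc : a * b * c + (s - a) * (s - b) * (s - c) = s * q := by
      unfold q; rw [hs]; ring
    rw [hR, hr]
    field_simp
    linear_combination s * habc + hS2
  rw [key, ge_iff_le, le_div_iff₀ hSpos]
  nlinarith [mul_le_mul_of_nonneg_left hqS hs0.le]
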